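/- Let ℓ ∈ ℕ, let h ∈ ℤ[x₁,...,x_ℓ] be an intersective polynomial with a fixed choice of p-adic integer roots {z_p}, and let h_d denote the associated auxiliary polynomials with completely multiplicative scaling function λ. Suppose d, q ∈ ℕ, A ⊆ ℕ satisfies (A − A) ∩ h_d(ℤ^ℓ) ⊆ {0}, and A' ⊆ {a : x + λ(q)·a ∈ A} for some x ∈ ℤ. Then (A' − A') ∩ h_{qd}(ℤ^ℓ) ⊆ {0}. -/
import Mathlib


open MvPolynomial

/-- Inheritance: for an intersective polynomial `h` with chosen `p`-adic roots,
associated shifts `r_d`, completely multiplicative scaling `λ`, and auxiliary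
polynomials `h_d(x) = h(r_d + d·x)/λ(d)`, if `(A − A) ∩ h_d(ℤ^ℓ) ⊆ {0}` and
`A' ⊆ {a : x + λ(q)·a ∈ A}`, then `(A' − A') ∩ h_{qd}(ℤ^ℓ) ⊆ {0}`. -/
theorem stmt_6 (ℓ : ℕ) (h : MvPolynomial (Fin ℓ) ℤ) (hh : h ≠ 0)
    (r : ℕ → Fin ℓ → ℤ) (lam : ℕ → ℤ) (hlampos : ∀ n, 0 < lam n)
    (hlam : ∀ m n : ℕ, lam (m * n) = lam m * lam n)
    (haux : ℕ → (Fin ℓ → ℤ) → ℤ)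
    (hdef : ∀ d : ℕ, ∀ y : Fin ℓ → ℤ,
      lam d * haux d y = eval (fun i => r d i + (d : ℤ) * y i) h)
    (hr : ∀ q d : ℕ, ∀ i, (d : ℤ) ∣ (r (q * d) i - r d i))
    (d q : ℕ) (A A' : Set ℤ) (hAnat : ∀ a ∈ A, 0 ≤ a) (x : ℤ)
    (hA : ∀ a ∈ A, ∀ a' ∈ A, ∀ n : Fin ℓ → ℤ, a - a' = haux d n → a = a')
    (hA' : A' ⊆ {a : ℤ | x + lam q * a ∈ A}) :
    ∀ a ∈ A', ∀ a' ∈ A', ∀ n : Fin ℓ → ℤ, a - a' = haux (q * d) n → a = a' := by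
  intro a ha a' ha' n heq
  have h1 : x + lam q * a ∈ A := hA' ha
  have h2 : x + lam q * a' ∈ A := hA' ha'
  set m : Fin ℓ → ℤ := fun i => (r (q * d) i - r d i) / d + q * n i with hm
  have key : haux d m = lam q * haux (q * d) n := by
    have hpos : (lam d : ℤ) ≠ 0 := ne_of_gt (hlampos d)
    apply mul_left_cancel₀ hpos
    rw [hdef d m, ← mul_assoc, mul_comm (lam d) (lam q), ← hlam, hdef (q * d) n]
    have hfun : (fun i => r d i + (d : ℤ) * m i) = (fun i => r (q * d) i + ((q * d : ℕ) : ℤ) * n i) := by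
      funext i
      have hdvd := hr q d i
      have hcan : (d : ℤ) * ((r (q * d) i - r d i) / d) = r (q * d) i - r d i :=
        Int.mul_ediv_cancel' hdvd
      simp only [hm]
      push_cast
      rw [mul_add, hcan]
      ring
    rw [hfun]
  have heq2 : (x + lam q * a) - (x + lam q * a') = haux d m := by
    rw [key]
    rw [← heq]
    ring
  have := hA _ h1 _ h2 m heq2
  have : lam q * a = lam q * a' := by linarith
  exact mul_left_cancel₀ (ne_of_gt (hlampos q)) this
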